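/- arXiv:2509.00464 — 4 statements merged into one kernel-verified Lean document; each statement's English description precedes it below -/
import Mathlib

section
/- For τ ∈ (0,1) and real numbers u, v, the Knight identity holds: ρ_τ(u − v) − ρ_τ(u) = −v·(τ − 1_{u ≤ 0}) + ∫₀^v (1_{u ≤ s} − 1_{u ≤ 0}) ds. -/
noncomputable def checkLoss (τ : ℝ) (u : ℝ) : ℝ :=
  u * (τ - if u ≤ 0 then 1 else 0)

open MeasureTheory in
lemma step_intervalIntegrable (u a b : ℝ) :
    IntervalIntegrable (fun s => if u ≤ s then (1:ℝ) else 0) volume a b := by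
  apply Monotone.intervalIntegrable
  intro x y hxy
  by_cases hx : u ≤ x
  · simp [hx, hx.trans hxy]
  · by_cases hy : u ≤ y <;> simp [hx, hy]

open MeasureTheory in
lemma step_integral (u v : ℝ) :
    ∫ s in (0:ℝ)..v, (if u ≤ s then (1:ℝ) else 0) = max (v - u) 0 - max (-u) 0 := by
  have hae : ∀ᵐ s : ℝ, s ≠ u := by
    have hm : (volume : Measure ℝ) {u} = 0 := measure_singleton u
    filter_upwards [measure_eq_zero_iff_ae_notMem.mp hm] with s hs
    simpa using hs
  rcases le_total u 0 with hu | hu <;> rcases le_total u v with huv | huv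
  · -- u ≤ 0, u ≤ v : integrand is 1 on the interval
    rw [max_eq_left (by linarith), max_eq_left (by linarith)]
    rw [show (v - u) - (-u) = v by ring]
    rw [intervalIntegral.integral_congr (g := fun _ => (1:ℝ))]
    · simp
    · intro s hs
      rcases Set.mem_uIcc.mp hs with ⟨h, _⟩ | ⟨h, _⟩
      · simp [hu.trans h]
      · simp [huv.trans h]
  · -- u ≤ 0, v ≤ u : split at u
    rw [max_eq_right (by linarith), max_eq_left (by linarith)]
    have hsplit := intervalIntegral.integral_add_adjacent_intervals (a := (0:ℝ)) (b := u)
      (c := v) (f := fun s => if u ≤ s then (1:ℝ) else 0)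
      (step_intervalIntegrable u 0 u) (step_intervalIntegrable u u v)
    have h1 : ∫ s in (0:ℝ)..u, (if u ≤ s then (1:ℝ) else 0) = u := by
      rw [intervalIntegral.integral_congr_ae (g := fun _ => (1:ℝ))]
      · simp
      · filter_upwards with s hs
        have hmem : s ∈ Set.Ioc u 0 := by rwa [Set.uIoc_of_ge hu] at hs
        simp [le_of_lt hmem.1]
    have h2 : ∫ s in u..v, (if u ≤ s then (1:ℝ) else 0) = 0 := by
      rw [intervalIntegral.integral_congr_ae (g := fun _ => (0:ℝ))]
      · simp
      · filter_upwards [hae] with s hne hs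
        have hmem : s ∈ Set.Ioc v u := by rwa [Set.uIoc_of_ge huv] at hs
        have hlt : ¬ u ≤ s := fun h => hne (le_antisymm hmem.2 h)
        simp [hlt]
    linarith [hsplit, h1, h2]
  · -- 0 ≤ u, u ≤ v : split at u
    rw [max_eq_left (by linarith), max_eq_right (by linarith)]
    have hsplit := intervalIntegral.integral_add_adjacent_intervals (a := (0:ℝ)) (b := u)
      (c := v) (f := fun s => if u ≤ s then (1:ℝ) else 0)
      (step_intervalIntegrable u 0 u) (step_intervalIntegrable u u v)
    have h1 : ∫ s in (0:ℝ)..u, (if u ≤ s then (1:ℝ) else 0) = 0 := by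
      rw [intervalIntegral.integral_congr_ae (g := fun _ => (0:ℝ))]
      · simp
      · filter_upwards [hae] with s hne hs
        have hmem : s ∈ Set.Ioc 0 u := by rwa [Set.uIoc_of_le hu] at hs
        have hlt : ¬ u ≤ s := fun h => hne (le_antisymm hmem.2 h)
        simp [hlt]
    have h2 : ∫ s in u..v, (if u ≤ s then (1:ℝ) else 0) = v - u := by
      rw [intervalIntegral.integral_congr_ae (g := fun _ => (1:ℝ))]
      · simp
      · filter_upwards with s hs
        have hmem : s ∈ Set.Ioc u v := by rwa [Set.uIoc_of_le huv] at hs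
        simp [le_of_lt hmem.1]
    linarith [hsplit, h1, h2]
  · -- 0 ≤ u, v ≤ u : integrand is 0 a.e. on the interval
    rw [max_eq_right (by linarith), max_eq_right (by linarith)]
    rw [intervalIntegral.integral_congr_ae (g := fun _ => (0:ℝ))]
    · simp
    · filter_upwards [hae] with s hne hs
      have hle : s ≤ max 0 v := (Set.mem_uIoc.mp hs).elim
        (fun h => h.2.trans (le_max_right _ _)) (fun h => h.2.trans (le_max_left _ _))
      have hlt : ¬ u ≤ s := fun h => hne (le_antisymm (hle.trans (max_le hu huv)) h)
      simp [hlt]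

open MeasureTheory in
/-- Knight's identity for the check loss. -/
theorem stmt3 (τ : ℝ) (hτ : τ ∈ Set.Ioo (0 : ℝ) 1) (u v : ℝ) :
    checkLoss τ (u - v) - checkLoss τ u =
      -v * (τ - if u ≤ 0 then 1 else 0) +
        ∫ s in (0 : ℝ)..v,
          ((if u ≤ s then (1 : ℝ) else 0) - (if u ≤ 0 then (1 : ℝ) else 0)) := by
  have hsub : ∫ s in (0:ℝ)..v,
      ((if u ≤ s then (1 : ℝ) else 0) - (if u ≤ 0 then (1 : ℝ) else 0)) =
      (∫ s in (0:ℝ)..v, (if u ≤ s then (1:ℝ) else 0)) - v * (if u ≤ 0 then (1:ℝ) else 0) := by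
    rw [intervalIntegral.integral_sub (step_intervalIntegrable u 0 v) intervalIntegrable_const]
    simp [mul_comm]
  rw [hsub, step_integral]
  unfold checkLoss
  split_ifs with h1 h2 h2
  · rw [max_eq_left (by linarith), max_eq_left (by linarith)]; ring
  · rw [max_eq_left (by linarith), max_eq_right (by linarith)]; ring
  · rw [max_eq_right (by linarith), max_eq_left (by linarith)]; ring
  · rw [max_eq_right (by linarith), max_eq_right (by linarith)]; ring
end

section
/- Let (X, Y) be random variables, R a Bernoulli response indicator, and suppose the selection model satisfies Pr(R = 1 | X, Y) = 1/(1 + exp(φ(X) + γY)) for a measurable function φ and constant γ, with this probability bounded away from 0 and 1. Then the conditional odds of nonresponse given X satisfy (1 − Pr(R = 1 | X)) / Pr(R = 1 | X) = exp(φ(X)) · E[exp(γY) | X, R = 1]. -/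
open MeasureTheory ProbabilityTheory

theorem stmt5 {Ω : Type*} [m0 : MeasurableSpace Ω] (μ : Measure Ω) [IsProbabilityMeasure μ]
    (X Y R : Ω → ℝ) (hX : Measurable X) (hY : Measurable Y) (hR : Measurable R)
    (φ : ℝ → ℝ) (hφ : Measurable φ) (γ : ℝ)
    (A : Set Ω) (hA : A = {ω | R ω = 1})
    (mX : MeasurableSpace Ω) (hmX : mX = MeasurableSpace.comap X inferInstance)
    (mXY : MeasurableSpace Ω)
    (hmXY : mXY = MeasurableSpace.comap (fun ω => (X ω, Y ω)) inferInstance)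
    (π : Ω → ℝ) (hπ : π = fun ω => 1 / (1 + Real.exp (φ (X ω) + γ * Y ω)))
    -- the selection model: Pr(R = 1 | X, Y) = π(X, Y)
    (hmodel : μ[A.indicator (fun _ => (1 : ℝ)) | mXY] =ᵐ[μ] π)
    -- bounded away from 0 and 1
    (hbound : ∀ᵐ ω ∂μ, 0 < π ω ∧ π ω < 1)
    -- Pr(R = 1 | X)
    (pX : Ω → ℝ) (hpX : pX = μ[A.indicator (fun _ => (1 : ℝ)) | mX])
    (hpXpos : ∀ᵐ ω ∂μ, 0 < pX ω)
    (htilt : Integrable (fun ω => Real.exp (γ * Y ω)) (μ[|A])) :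
    (fun ω => (1 - pX ω) / pX ω) =ᵐ[μ]
      fun ω => Real.exp (φ (X ω)) *
        ((μ[|A])[fun ω' => Real.exp (γ * Y ω') | mX]) ω := by
  letI : MeasurableSpace Ω := m0
  set f : Ω → ℝ := fun ω => Real.exp (γ * Y ω) with hfdef
  have hAmeas : MeasurableSet[m0] A := by rw [hA]; exact hR (measurableSet_singleton 1)
  have hmX_le : mX ≤ m0 := by rw [hmX]; exact hX.comap_le
  have hXYm : Measurable[m0] fun ω => (X ω, Y ω) := hX.prodMk hY
  have hmXY_le : mXY ≤ m0 := by rw [hmXY]; exact hXYm.comap_le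
  have hXmXY : Measurable[mXY] X := by
    rw [hmXY]; exact measurable_fst.comp (Measurable.of_comap_le le_rfl)
  have hmX_le_XY : mX ≤ mXY := by rw [hmX]; exact hXmXY.comap_le
  have h1Aint : Integrable (A.indicator fun _ => (1 : ℝ)) μ :=
    (integrable_const 1).indicator hAmeas
  have hXmX : Measurable[mX] X := by
    rw [hmX]; exact Measurable.of_comap_le le_rfl
  have hYmXY : Measurable[mXY] Y := by
    rw [hmXY]
    exact measurable_snd.comp (Measurable.of_comap_le le_rfl)
  have hfmXY : StronglyMeasurable[mXY] f :=
    (Real.measurable_exp.comp (hYmXY.const_mul γ)).stronglyMeasurable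
  have heφX : StronglyMeasurable[mX] fun ω => Real.exp (φ (X ω)) :=
    (Real.measurable_exp.comp (hφ.comp hXmX)).stronglyMeasurable
  -- elementary facts about π
  have hπpos : ∀ ω, 0 < π ω := by
    intro ω; rw [hπ]; positivity
  have hπle : ∀ ω, π ω ≤ 1 := by
    intro ω; rw [hπ]; dsimp only
    rw [div_le_one (by positivity)]
    linarith [Real.exp_pos (φ (X ω) + γ * Y ω)]
  have hπmeas : Measurable[m0] π := by
    rw [hπ]
    exact measurable_const.div
      (measurable_const.add (Real.measurable_exp.comp ((hφ.comp hX).add (hY.const_mul γ))))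
  have hπint : Integrable π μ := by
    refine (integrable_const (1 : ℝ)).mono' hπmeas.aestronglyMeasurable ?_
    filter_upwards with ω
    rw [Real.norm_eq_abs, abs_of_pos (hπpos ω)]
    exact hπle ω
  -- the key pointwise identity: 1 - π = exp(φ X) * (f * π)
  have hid : ∀ ω, 1 - π ω = Real.exp (φ (X ω)) * (f ω * π ω) := by
    intro ω
    rw [hπ, hfdef]
    dsimp only
    have h0 : (0 : ℝ) < 1 + Real.exp (φ (X ω) + γ * Y ω) := by positivity
    have hE : Real.exp (φ (X ω)) * Real.exp (γ * Y ω)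
        = Real.exp (φ (X ω) + γ * Y ω) := (Real.exp_add _ _).symm
    field_simp
    linarith [hE]
  -- μ A ≠ 0
  haveI : (MeasureTheory.ae μ).NeBot := ae_neBot.mpr (IsProbabilityMeasure.ne_zero μ)
  have hμA_ne : μ A ≠ 0 := by
    intro h0
    have h1 : (A.indicator fun _ => (1 : ℝ)) =ᵐ[μ] 0 := by
      filter_upwards [measure_eq_zero_iff_ae_notMem.mp h0] with ω hω
      simp [Set.indicator_of_notMem hω]
    have h2 : pX =ᵐ[μ] 0 := by
      rw [hpX]
      exact (condExp_congr_ae h1).trans (by rw [condExp_zero])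
    obtain ⟨ω, hω1, hω2⟩ := (hpXpos.and h2).exists
    rw [hω2] at hω1
    exact lt_irrefl 0 hω1
  have hμA_top : μ A ≠ ⊤ := measure_ne_top μ A
  haveI hcP : IsProbabilityMeasure (μ[|A]) := cond_isProbabilityMeasure hμA_ne
  have hcond_def : (μ[|A]) = (μ A)⁻¹ • μ.restrict A := rfl
  have hinv0 : (μ A)⁻¹ ≠ 0 := ENNReal.inv_ne_zero.mpr hμA_top
  have hinvtop : (μ A)⁻¹ ≠ ⊤ := ENNReal.inv_ne_top.mpr hμA_ne
  have htoR_ne : ((μ A)⁻¹).toReal ≠ 0 := by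
    rw [ENNReal.toReal_inv]
    exact inv_ne_zero (ENNReal.toReal_ne_zero.mpr ⟨hμA_ne, hμA_top⟩)
  -- integrability transfers from μ[|A] to μ
  have hrest_of_cond : ∀ h : Ω → ℝ, Integrable h (μ[|A]) → Integrable (A.indicator h) μ := by
    intro h hh
    rw [hcond_def, integrable_smul_measure hinv0 hinvtop] at hh
    exact IntegrableOn.integrable_indicator (f := h) (s := A) (μ := μ) hh hAmeas
  have hindf_int : Integrable (A.indicator f) μ := hrest_of_cond f htilt
  -- pull-out at mXY : μ[1_A f | mXY] = f π
  have hind_eq_mul : A.indicator f = fun ω => f ω * A.indicator (fun _ => (1 : ℝ)) ω := by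
    funext ω; by_cases h : ω ∈ A <;> simp [h]
  have h3 : μ[A.indicator f|mXY] =ᵐ[μ] fun ω => f ω * π ω := by
    have hpull := condExp_mul_of_stronglyMeasurable_left (μ := μ) hfmXY
      (by have := hindf_int; rwa [hind_eq_mul] at this) h1Aint
    refine (by rw [hind_eq_mul]; exact hpull :
        μ[A.indicator f|mXY] =ᵐ[μ] f * μ[A.indicator (fun _ => (1 : ℝ))|mXY]).trans ?_
    filter_upwards [hmodel] with ω hω
    simp only [Pi.mul_apply]
    rw [hω]
  have h4 : Integrable (fun ω => f ω * π ω) μ := integrable_condExp.congr h3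
  have h_one_sub_int : Integrable (fun ω => 1 - π ω) μ := (integrable_const 1).sub hπint
  -- condexp of 1 - 1_A at mXY
  have hc1 : μ[(fun ω => 1 - A.indicator (fun _ => (1 : ℝ)) ω)|mXY] =ᵐ[μ]
      fun ω => 1 - π ω := by
    refine (condExp_sub (m := mXY) (integrable_const (1 : ℝ)) h1Aint).trans ?_
    filter_upwards [hmodel] with ω hω
    simp only [Pi.sub_apply]
    rw [hω, condExp_const hmXY_le]
  -- 1 - pX is the condexp of 1 - 1_A at mX
  have hc2 : (fun ω => 1 - pX ω) =ᵐ[μ]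
      μ[(fun ω => 1 - A.indicator (fun _ => (1 : ℝ)) ω)|mX] := by
    refine Filter.EventuallyEq.symm
      ((condExp_sub (m := mX) (integrable_const (1 : ℝ)) h1Aint).trans ?_)
    rw [hpX]
    filter_upwards with ω
    simp only [Pi.sub_apply]
    rw [condExp_const hmX_le]
  -- tower and substituting the pointwise identity
  have htower1 : μ[(fun ω => 1 - A.indicator (fun _ => (1 : ℝ)) ω)|mX] =ᵐ[μ]
      μ[(fun ω => Real.exp (φ (X ω)) * (f ω * π ω))|mX] := by
    refine (condExp_condExp_of_le hmX_le_XY hmXY_le).symm.trans ?_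
    exact condExp_congr_ae (hc1.trans (Filter.Eventually.of_forall hid))
  -- pull out exp(φ X) at mX
  have hpull2 : μ[(fun ω => Real.exp (φ (X ω)) * (f ω * π ω))|mX] =ᵐ[μ]
      fun ω => Real.exp (φ (X ω)) * (μ[(fun ω' => f ω' * π ω')|mX]) ω := by
    exact condExp_mul_of_stronglyMeasurable_left heφX
      (h_one_sub_int.congr (Filter.Eventually.of_forall hid)) h4
  -- tower for f π
  have h5c : μ[(fun ω' => f ω' * π ω')|mX] =ᵐ[μ] μ[A.indicator f|mX] :=
    (condExp_congr_ae h3.symm).trans (condExp_condExp_of_le hmX_le_XY hmXY_le)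
  -- the conditional-measure condexp
  set g : Ω → ℝ := (μ[|A])[f|mX] with hgdef
  have hgSM : StronglyMeasurable[mX] g := stronglyMeasurable_condExp
  have hindg_int : Integrable (A.indicator g) μ := hrest_of_cond g integrable_condExp
  have hind_eq_mul' : A.indicator g = fun ω => g ω * A.indicator (fun _ => (1 : ℝ)) ω := by
    funext ω; by_cases h : ω ∈ A <;> simp [h]
  have E2 : μ[A.indicator g|mX] =ᵐ[μ] fun ω => g ω * pX ω := by
    have hp := condExp_mul_of_stronglyMeasurable_left hgSM
      (by have := hindg_int; rwa [hind_eq_mul'] at this) h1Aint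
    refine (by rw [hind_eq_mul']; exact hp :
        μ[A.indicator g|mX] =ᵐ[μ] g * μ[A.indicator (fun _ => (1 : ℝ))|mX]).trans ?_
    rw [hpX]
    filter_upwards with ω
    rfl
  -- conversion of set integrals under μ[|A] to μ
  have conv : ∀ (h : Ω → ℝ) (s : Set Ω), MeasurableSet s →
      ∫ x in s, h x ∂(μ[|A]) = ((μ A)⁻¹).toReal * ∫ x in s, A.indicator h x ∂μ := by
    intro h s hsm
    rw [hcond_def, Measure.restrict_smul, integral_smul_measure, smul_eq_mul]
    congr 1
    rw [Measure.restrict_restrict (μ := μ) (t := A) hsm,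
      setIntegral_indicator (μ := μ) (f := h) (s := s) hAmeas]
  have E1 : μ[A.indicator g|mX] =ᵐ[μ] μ[A.indicator f|mX] := by
    refine ae_eq_condExp_of_forall_setIntegral_eq hmX_le hindf_int
      (fun s hs hμs => integrable_condExp.integrableOn)
      (fun s hs hμs => ?_)
      stronglyMeasurable_condExp.aestronglyMeasurable
    rw [setIntegral_condExp hmX_le hindg_int hs]
    have hsm : MeasurableSet s := hmX_le s hs
    have key := setIntegral_condExp (μ := μ[|A]) hmX_le htilt hs
    rw [conv f s hsm, conv g s hsm] at key
    exact mul_left_cancel₀ htoR_ne key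
  -- assemble
  have hkey : (fun ω => 1 - pX ω) =ᵐ[μ]
      fun ω => Real.exp (φ (X ω)) * (g ω * pX ω) := by
    refine hc2.trans (htower1.trans (hpull2.trans ?_))
    have h6 : μ[(fun ω' => f ω' * π ω')|mX] =ᵐ[μ] fun ω => g ω * pX ω :=
      h5c.trans (E1.symm.trans E2)
    filter_upwards [h6] with ω hω
    rw [hω]
  filter_upwards [hkey, hpXpos] with ω h1 h2
  rw [h1, mul_div_assoc, mul_div_assoc, div_self h2.ne', mul_one]
end

section
/- Under the exponential tilting selection model Pr(R = 1 | X, Y) = 1/(1 + exp(φ(X) + γY)) with 0 < Pr(R=1|X,Y) < 1 a.s., the conditional density of Y given X and R = 0 equals the γ-exponentially-tilted conditional density given R = 1: f(y | X, R=0) = f(y | X, R=1) · exp(γy) / E[exp(γY) | X, R=1]. -/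
open MeasureTheory

/-- Exponential-tilting identity for the conditional density of nonrespondents,
stated conditionally on `X = x`. -/
theorem stmt6 (x : ℝ) (φ : ℝ → ℝ) (γ : ℝ)
    (f : ℝ → ℝ)  -- conditional density of Y given X = x
    (hf0 : ∀ y, 0 ≤ f y) (hfint : Integrable f) (hf1 : (∫ y, f y) = 1)
    (π : ℝ → ℝ) (hπ : π = fun y => 1 / (1 + Real.exp (φ x + γ * y)))
    (hπbound : ∀ y, 0 < π y ∧ π y < 1)
    (p1 p0 : ℝ) (hp1 : p1 = ∫ y, f y * π y) (hp0 : p0 = ∫ y, f y * (1 - π y))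
    (hp1pos : 0 < p1) (hp0pos : 0 < p0)
    (f1 f0 : ℝ → ℝ)  -- conditional densities of Y given X = x and R = 1, R = 0
    (hf1d : f1 = fun y => f y * π y / p1)
    (hf0d : f0 = fun y => f y * (1 - π y) / p0)
    (htilt : Integrable (fun z => Real.exp (γ * z) * f1 z)) :
    ∀ y, f0 y = f1 y * Real.exp (γ * y) / (∫ z, Real.exp (γ * z) * f1 z) := by
  have hc : ∀ y, 1 - π y = π y * Real.exp (φ x) * Real.exp (γ * y) := by
    intro y
    subst hπ
    simp only
    have hE : (0:ℝ) < 1 + Real.exp (φ x + γ * y) := by positivity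
    rw [Real.exp_add] at hE ⊢
    field_simp
    ring
  have hcne : Real.exp (φ x) ≠ 0 := Real.exp_ne_zero _
  have hI : (∫ z, Real.exp (γ * z) * f1 z) = p0 / (Real.exp (φ x) * p1) := by
    have hfun : (fun z => Real.exp (γ * z) * f1 z)
        = fun z => f z * (1 - π z) * (Real.exp (φ x) * p1)⁻¹ := by
      funext z
      rw [hf1d]
      simp only
      rw [hc z]
      field_simp
    rw [hfun, integral_mul_const, ← hp0, div_eq_mul_inv]
  intro y
  rw [hf0d, hI, hf1d]
  simp only
  rw [hc y]
  field_simp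
end

section
/- Let g be a measurable function with E|g(X,Y)| < ∞ and suppose Pr(R=1 | X, Y) = 1/(1 + exp(φ(X) + γY)) with 0 < Pr < 1 a.s. Then E[g(X,Y)] = E[ R·g(X,Y) + (1−R)·M(X) ], where M(X) = E[exp(γY) g(X,Y) | X, R=1] / E[exp(γY) | X, R=1]. -/
open MeasureTheory ProbabilityTheory Filter

lemma aux_isup_ofReal {c b : ℝ} (hc : 0 ≤ c) (hb : 0 ≤ b) :
    (⨆ n : ℕ, ENNReal.ofReal (min c (n : ℝ) * b)) = ENNReal.ofReal (c * b) := by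
  apply le_antisymm
  · exact iSup_le fun n =>
      ENNReal.ofReal_le_ofReal (mul_le_mul_of_nonneg_right (min_le_left _ _) hb)
  · have h : min c ((⌈c⌉₊ : ℕ) : ℝ) = c := min_eq_left (Nat.le_ceil c)
    calc ENNReal.ofReal (c * b) = ENNReal.ofReal (min c ((⌈c⌉₊ : ℕ) : ℝ) * b) := by rw [h]
    _ ≤ _ := le_iSup (fun n : ℕ => ENNReal.ofReal (min c (n : ℝ) * b)) ⌈c⌉₊


lemma sm_inf_const {Ω : Type*} {m : MeasurableSpace Ω} {f : Ω → ℝ}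
    (hf : StronglyMeasurable[m] f) (c : ℝ) :
    StronglyMeasurable[m] (fun ω => min (f ω) c) :=
  hf.inf stronglyMeasurable_const

lemma sm_sup_const {Ω : Type*} {m : MeasurableSpace Ω} {f : Ω → ℝ}
    (hf : StronglyMeasurable[m] f) (c : ℝ) :
    StronglyMeasurable[m] (fun ω => max (f ω) c) :=
  hf.sup stronglyMeasurable_const

lemma key_nonneg {Ω : Type*} {m m0 : MeasurableSpace Ω} (hm : m ≤ m0)
    (μ : Measure Ω) [IsProbabilityMeasure μ] {A : Set Ω} (hAm : MeasurableSet A)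
    {f : Ω → ℝ} (hf : StronglyMeasurable[m] f) (hf0 : ∀ ω, 0 ≤ f ω)
    (hfπ : Integrable (fun ω => f ω * (μ[A.indicator (fun _ => (1:ℝ)) | m]) ω) μ) :
    Integrable (fun ω => A.indicator (fun _ => (1:ℝ)) ω * f ω) μ ∧
      ∫ ω, A.indicator (fun _ => (1:ℝ)) ω * f ω ∂μ
        = ∫ ω, f ω * (μ[A.indicator (fun _ => (1:ℝ)) | m]) ω ∂μ := by
  set I : Ω → ℝ := A.indicator (fun _ => (1:ℝ)) with hIdef
  set π : Ω → ℝ := μ[I | m] with hπdef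
  have hI_int : Integrable I μ := (integrable_const (1:ℝ)).indicator hAm
  have hI_nn : ∀ ω, 0 ≤ I ω := fun ω => Set.indicator_nonneg (fun _ _ => zero_le_one) ω
  have hπ_nn : 0 ≤ᵐ[μ] π := condExp_nonneg (Eventually.of_forall hI_nn)
  have hπ_int : Integrable π μ := integrable_condExp
  have hf_meas : StronglyMeasurable f := hf.mono hm
  have hI_meas : Measurable I := measurable_const.indicator hAm
  have hπ_meas : Measurable π := (stronglyMeasurable_condExp.mono hm).measurable
  have key : ∀ n : ℕ, ∫⁻ ω, ENNReal.ofReal (min (f ω) n * I ω) ∂μ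
      = ∫⁻ ω, ENNReal.ofReal (min (f ω) n * π ω) ∂μ := by
    intro n
    set fn : Ω → ℝ := fun ω => min (f ω) n with hfndef
    have hfn_sm : StronglyMeasurable[m] fn := sm_inf_const hf n
    have hfn_nn : ∀ ω, 0 ≤ fn ω := fun ω => le_min (hf0 ω) (Nat.cast_nonneg n)
    have hfn_bd : ∀ ω, ‖fn ω‖ ≤ (n : ℝ) := fun ω => by
      rw [Real.norm_eq_abs, abs_of_nonneg (hfn_nn ω)]; exact min_le_right _ _
    have h1 : Integrable (fn * I) μ :=
      hI_int.bdd_mul (hfn_sm.mono hm).aestronglyMeasurable (Eventually.of_forall hfn_bd)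
    have h2 : Integrable (fn * π) μ :=
      hπ_int.bdd_mul (hfn_sm.mono hm).aestronglyMeasurable (Eventually.of_forall hfn_bd)
    have hpull : μ[fn * I | m] =ᵐ[μ] fn * π := condExp_mul_of_stronglyMeasurable_left hfn_sm h1 hI_int
    have hint_eq : ∫ ω, (fn * I) ω ∂μ = ∫ ω, (fn * π) ω ∂μ := by
      rw [← integral_condExp hm (f := fn * I)]
      exact integral_congr_ae hpull
    have e1 : ENNReal.ofReal (∫ ω, (fn * I) ω ∂μ) = ∫⁻ ω, ENNReal.ofReal ((fn * I) ω) ∂μ :=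
      ofReal_integral_eq_lintegral_ofReal h1
        (Eventually.of_forall fun ω => mul_nonneg (hfn_nn ω) (hI_nn ω))
    have e2 : ENNReal.ofReal (∫ ω, (fn * π) ω ∂μ) = ∫⁻ ω, ENNReal.ofReal ((fn * π) ω) ∂μ :=
      ofReal_integral_eq_lintegral_ofReal h2
        (hπ_nn.mono fun ω hω => mul_nonneg (hfn_nn ω) hω)
    calc ∫⁻ ω, ENNReal.ofReal (min (f ω) n * I ω) ∂μ
        = ∫⁻ ω, ENNReal.ofReal ((fn * I) ω) ∂μ := rfl
      _ = ENNReal.ofReal (∫ ω, (fn * I) ω ∂μ) := e1.symm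
      _ = ENNReal.ofReal (∫ ω, (fn * π) ω ∂μ) := by rw [hint_eq]
      _ = ∫⁻ ω, ENNReal.ofReal ((fn * π) ω) ∂μ := e2
      _ = ∫⁻ ω, ENNReal.ofReal (min (f ω) n * π ω) ∂μ := rfl
  have hmeas_I : ∀ n : ℕ, AEMeasurable (fun ω => ENNReal.ofReal (min (f ω) n * I ω)) μ :=
    fun n => (ENNReal.measurable_ofReal.comp
      (((hf_meas.measurable.min measurable_const).mul hI_meas))).aemeasurable
  have hmeas_π : ∀ n : ℕ, AEMeasurable (fun ω => ENNReal.ofReal (min (f ω) n * π ω)) μ :=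
    fun n => (ENNReal.measurable_ofReal.comp
      (((hf_meas.measurable.min measurable_const).mul hπ_meas))).aemeasurable
  have hmono : ∀ {b : ℝ}, 0 ≤ b → ∀ ω : Ω, Monotone fun n : ℕ => ENNReal.ofReal (min (f ω) n * b) := by
    intro b hb ω n k hnk
    exact ENNReal.ofReal_le_ofReal
      (mul_le_mul_of_nonneg_right (min_le_min le_rfl (Nat.cast_le.mpr hnk)) hb)
  have L_I : ∫⁻ ω, ENNReal.ofReal (f ω * I ω) ∂μ
      = ⨆ n : ℕ, ∫⁻ ω, ENNReal.ofReal (min (f ω) n * I ω) ∂μ := by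
    rw [← lintegral_iSup' hmeas_I (Eventually.of_forall fun ω => hmono (hI_nn ω) ω)]
    exact lintegral_congr fun ω => (aux_isup_ofReal (hf0 ω) (hI_nn ω)).symm
  have L_π : ∫⁻ ω, ENNReal.ofReal (f ω * π ω) ∂μ
      = ⨆ n : ℕ, ∫⁻ ω, ENNReal.ofReal (min (f ω) n * π ω) ∂μ := by
    rw [← lintegral_iSup' hmeas_π (hπ_nn.mono fun ω hω => hmono hω ω)]
    exact lintegral_congr_ae (hπ_nn.mono fun ω hω => (aux_isup_ofReal (hf0 ω) hω).symm)
  have main : ∫⁻ ω, ENNReal.ofReal (f ω * I ω) ∂μ = ∫⁻ ω, ENNReal.ofReal (f ω * π ω) ∂μ := by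
    rw [L_I, L_π]; exact iSup_congr key
  have hfin : ∫⁻ ω, ENNReal.ofReal (f ω * π ω) ∂μ < ⊤ := by
    refine lt_of_le_of_lt (lintegral_mono fun ω => ?_)
      ((hasFiniteIntegral_iff_norm _).mp hfπ.hasFiniteIntegral)
    exact ENNReal.ofReal_le_ofReal (le_abs_self _)
  have hint : Integrable (fun ω => I ω * f ω) μ := by
    refine ⟨(hI_meas.mul hf_meas.measurable).aestronglyMeasurable, ?_⟩
    rw [hasFiniteIntegral_iff_norm]
    have : ∀ ω, ENNReal.ofReal ‖I ω * f ω‖ = ENNReal.ofReal (f ω * I ω) := fun ω => by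
      rw [Real.norm_eq_abs, abs_of_nonneg (mul_nonneg (hI_nn ω) (hf0 ω)), mul_comm]
    rw [lintegral_congr this, main]
    exact hfin
  refine ⟨hint, ?_⟩
  rw [integral_eq_lintegral_of_nonneg_ae
      (Eventually.of_forall fun ω => mul_nonneg (hI_nn ω) (hf0 ω)) hint.1,
    integral_eq_lintegral_of_nonneg_ae
      (hπ_nn.mono fun ω hω => mul_nonneg (hf0 ω) hω) hfπ.1]
  congr 1
  rw [← main]
  exact lintegral_congr fun ω => by rw [mul_comm]

lemma key_signed {Ω : Type*} {m m0 : MeasurableSpace Ω} (hm : m ≤ m0)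
    (μ : Measure Ω) [IsProbabilityMeasure μ] {A : Set Ω} (hAm : MeasurableSet A)
    {f : Ω → ℝ} (hf : StronglyMeasurable[m] f)
    (hfπ : Integrable (fun ω => f ω * (μ[A.indicator (fun _ => (1:ℝ)) | m]) ω) μ) :
    Integrable (fun ω => A.indicator (fun _ => (1:ℝ)) ω * f ω) μ ∧
      ∫ ω, A.indicator (fun _ => (1:ℝ)) ω * f ω ∂μ
        = ∫ ω, f ω * (μ[A.indicator (fun _ => (1:ℝ)) | m]) ω ∂μ := by
  set I : Ω → ℝ := A.indicator (fun _ => (1:ℝ)) with hIdef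
  set π : Ω → ℝ := μ[I | m] with hπdef
  set fp : Ω → ℝ := fun ω => max (f ω) 0 with hfpdef
  set fm : Ω → ℝ := fun ω => max (-f ω) 0 with hfmdef
  have hfp_sm : StronglyMeasurable[m] fp := sm_sup_const hf 0
  have hfm_sm : StronglyMeasurable[m] fm := sm_sup_const hf.neg 0
  have hπ_meas : Measurable π := (stronglyMeasurable_condExp.mono hm).measurable
  have habs : ∀ ω, |fp ω| ≤ |f ω| := fun ω => by
    rw [abs_of_nonneg (le_max_right _ _)]
    exact max_le (le_abs_self _) (abs_nonneg _)
  have habs' : ∀ ω, |fm ω| ≤ |f ω| := fun ω => by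
    rw [abs_of_nonneg (le_max_right _ _)]
    exact max_le (neg_le_abs _) (abs_nonneg _)
  have hfpπ : Integrable (fun ω => fp ω * π ω) μ := by
    refine hfπ.mono (((hfp_sm.mono hm).measurable.mul hπ_meas).aestronglyMeasurable)
      (Eventually.of_forall fun ω => ?_)
    simp only [Real.norm_eq_abs, abs_mul]
    exact mul_le_mul_of_nonneg_right (habs ω) (abs_nonneg _)
  have hfmπ : Integrable (fun ω => fm ω * π ω) μ := by
    refine hfπ.mono (((hfm_sm.mono hm).measurable.mul hπ_meas).aestronglyMeasurable)
      (Eventually.of_forall fun ω => ?_)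
    simp only [Real.norm_eq_abs, abs_mul]
    exact mul_le_mul_of_nonneg_right (habs' ω) (abs_nonneg _)
  obtain ⟨i1, e1⟩ := key_nonneg hm μ hAm hfp_sm (fun ω => le_max_right _ _) hfpπ
  obtain ⟨i2, e2⟩ := key_nonneg hm μ hAm hfm_sm (fun ω => le_max_right _ _) hfmπ
  have hfeq : ∀ ω, f ω = fp ω - fm ω := fun ω => (max_zero_sub_eq_self (f ω)).symm
  have hint : Integrable (fun ω => I ω * f ω) μ := by
    refine (i1.sub i2).congr (Eventually.of_forall fun ω => ?_)
    simp only [Pi.sub_apply, hfeq]; ring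
  refine ⟨hint, ?_⟩
  calc ∫ ω, I ω * f ω ∂μ = ∫ ω, (I ω * fp ω - I ω * fm ω) ∂μ := by
        refine integral_congr_ae (Eventually.of_forall fun ω => ?_)
        simp only [hfeq]; ring
    _ = (∫ ω, I ω * fp ω ∂μ) - ∫ ω, I ω * fm ω ∂μ := integral_sub i1 i2
    _ = (∫ ω, fp ω * π ω ∂μ) - ∫ ω, fm ω * π ω ∂μ := by rw [e1, e2]
    _ = ∫ ω, (fp ω * π ω - fm ω * π ω) ∂μ := (integral_sub hfpπ hfmπ).symm
    _ = ∫ ω, f ω * π ω ∂μ := by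
        refine integral_congr_ae (Eventually.of_forall fun ω => ?_)
        simp only [hfeq]; ring

theorem stmt7 {Ω : Type*} [m0 : MeasurableSpace Ω] (μ : Measure Ω) [IsProbabilityMeasure μ]
    (X Y R : Ω → ℝ) (hX : Measurable X) (hY : Measurable Y) (hR : Measurable R)
    (φ : ℝ → ℝ) (hφ : Measurable φ) (γ : ℝ)
    (g : ℝ × ℝ → ℝ) (hg : Measurable g)
    (hgint : Integrable (fun ω => g (X ω, Y ω)) μ)
    (A : Set Ω) (hA : A = {ω | R ω = 1})
    (mX : MeasurableSpace Ω) (hmX : mX = MeasurableSpace.comap X inferInstance)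
    (mXY : MeasurableSpace Ω)
    (hmXY : mXY = MeasurableSpace.comap (fun ω => (X ω, Y ω)) inferInstance)
    (π : Ω → ℝ) (hπ : π = fun ω => 1 / (1 + Real.exp (φ (X ω) + γ * Y ω)))
    (hmodel : μ[A.indicator (fun _ => (1 : ℝ)) | mXY] =ᵐ[μ] π)
    (hbound : ∀ᵐ ω ∂μ, 0 < π ω ∧ π ω < 1)
    (htilt1 : Integrable (fun ω => Real.exp (γ * Y ω)) (μ[|A]))
    (htilt2 : Integrable (fun ω => Real.exp (γ * Y ω) * g (X ω, Y ω)) (μ[|A]))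
    (M : Ω → ℝ)
    (hM : M = fun ω =>
      ((μ[|A])[fun ω' => Real.exp (γ * Y ω') * g (X ω', Y ω') | mX]) ω /
        ((μ[|A])[fun ω' => Real.exp (γ * Y ω') | mX]) ω)
    (hden : ∀ᵐ ω ∂μ, ((μ[|A])[fun ω' => Real.exp (γ * Y ω') | mX]) ω ≠ 0)
    (hRHSint : Integrable (fun ω =>
      A.indicator (fun _ => (1 : ℝ)) ω * g (X ω, Y ω)
        + (1 - A.indicator (fun _ => (1 : ℝ)) ω) * M ω) μ) :
    (∫ ω, g (X ω, Y ω) ∂μ) =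
      ∫ ω, (A.indicator (fun _ => (1 : ℝ)) ω * g (X ω, Y ω)
        + (1 - A.indicator (fun _ => (1 : ℝ)) ω) * M ω) ∂μ := by
  letI : MeasurableSpace Ω := m0
  set I : Ω → ℝ := A.indicator (fun _ => (1 : ℝ)) with hIdef
  have hAm : MeasurableSet[m0] A := by rw [hA]; exact hR (measurableSet_singleton 1)
  have hmXY_le : mXY ≤ m0 := by rw [hmXY]; exact measurable_iff_comap_le.mp (hX.prodMk hY)
  have hmX_le : mX ≤ m0 := by rw [hmX]; exact measurable_iff_comap_le.mp hX
  have hmX_le_XY : mX ≤ mXY := by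
    rw [hmX, hmXY]
    have h1 : (MeasurableSpace.comap X (inferInstance : MeasurableSpace ℝ))
        = MeasurableSpace.comap (fun ω => (X ω, Y ω))
            (MeasurableSpace.comap Prod.fst inferInstance) := by
      rw [MeasurableSpace.comap_comp]; rfl
    rw [h1]
    exact MeasurableSpace.comap_mono (measurable_iff_comap_le.mp measurable_fst)
  have hXmX : Measurable[mX] X := measurable_iff_comap_le.mpr (le_of_eq hmX.symm)
  have hpXY : Measurable[mXY] (fun ω => (X ω, Y ω)) :=
    measurable_iff_comap_le.mpr (le_of_eq hmXY.symm)
  have hg_sm : StronglyMeasurable[mXY] (fun ω => g (X ω, Y ω)) :=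
    (hg.comp hpXY).stronglyMeasurable
  have he_sm : StronglyMeasurable[mXY] (fun ω => Real.exp (φ (X ω) + γ * Y ω)) :=
    ((Real.measurable_exp.comp
      ((hφ.comp measurable_fst).add (measurable_const.mul measurable_snd))).comp
        hpXY).stronglyMeasurable
  have hq_sm : StronglyMeasurable[mX] (fun ω => Real.exp (φ (X ω))) :=
    ((Real.measurable_exp.comp hφ).comp hXmX).stronglyMeasurable
  have hM_smX : StronglyMeasurable[mX] M := by
    rw [hM]
    exact (stronglyMeasurable_condExp.measurable.div
      stronglyMeasurable_condExp.measurable).stronglyMeasurable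
  have hM_sm : StronglyMeasurable[mXY] M := hM_smX.mono hmX_le_XY
  -- basic integrability
  have hInorm : ∀ ω, ‖I ω‖ ≤ 1 := fun ω => by
    by_cases h : ω ∈ A
    · simp [hIdef, Set.indicator_of_mem h]
    · simp [hIdef, Set.indicator_of_notMem h]
  have hI_int : Integrable I μ :=
    Integrable.indicator (integrable_const (μ := μ) (1 : ℝ)) hAm
  have hIg_int : Integrable (fun ω => I ω * g (X ω, Y ω)) μ :=
    hgint.bdd_mul ((@measurable_const ℝ Ω _ m0 1).indicator hAm).aestronglyMeasurable (Filter.Eventually.of_forall hInorm)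
  have hJM_int : Integrable (fun ω => (1 - I ω) * M ω) μ :=
    (hRHSint.sub hIg_int).congr (Filter.Eventually.of_forall fun ω => by
      simp only [Pi.sub_apply]; ring)
  have hJg_int : Integrable (fun ω => (1 - I ω) * g (X ω, Y ω)) μ :=
    (hgint.sub hIg_int).congr (Filter.Eventually.of_forall fun ω => by
      simp only [Pi.sub_apply]; ring)
  have hJ_int : Integrable (fun ω => 1 - I ω) μ := (integrable_const 1).sub hI_int
  -- pointwise facts about π
  have hπpos : ∀ ω, 0 < π ω := by intro ω; rw [hπ]; positivity
  have hπe : ∀ ω, π ω * Real.exp (φ (X ω) + γ * Y ω) = 1 - π ω := by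
    intro ω
    have h1 : (0 : ℝ) < 1 + Real.exp (φ (X ω) + γ * Y ω) := by positivity
    rw [hπ]
    field_simp
    ring
  -- μ A ≠ 0
  have hA0 : μ A ≠ 0 := by
    intro h0
    have hnm : ∀ᵐ ω ∂μ, ω ∉ A := by
      rw [ae_iff]
      convert h0 using 2
      ext ω; simp
    have hI0 : I =ᵐ[μ] 0 := hnm.mono fun ω hω => by
      simp [hIdef, Set.indicator_of_notMem hω]
    have h1 : π =ᵐ[μ] 0 :=
      hmodel.symm.trans ((condExp_congr_ae (m := mXY) hI0).trans (by rw [condExp_zero]))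
    have h2 : ∀ᵐ ω ∂μ, False := h1.mono fun ω hω => by
      simp only [Pi.zero_apply] at hω
      exact (hπpos ω).ne' hω
    have h3 : μ = 0 := by rwa [Filter.eventually_false_iff_eq_bot, ae_eq_bot] at h2
    exact (IsProbabilityMeasure.ne_zero μ) h3
  haveI hνP : IsProbabilityMeasure (μ[|A]) := cond_isProbabilityMeasure hA0
  have hμAtoReal : (μ A).toReal ≠ 0 := by
    simp [ENNReal.toReal_eq_zero_iff, hA0, measure_ne_top]
  have hae_cond : ∀ {p : Ω → Prop}, (∀ᵐ ω ∂μ, p ω) → (∀ᵐ ω ∂(μ[|A]), p ω) := by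
    intro p hp
    exact Measure.ae_smul_measure (ae_restrict_of_ae hp) _
  -- Step 1 and 2 : replace (1 - I) by (1 - π)
  have hcondJ : μ[(fun ω => 1 - I ω)|mXY] =ᵐ[μ] fun ω => 1 - π ω := by
    have h1 : (fun ω => 1 - I ω) = (fun _ : Ω => (1 : ℝ)) - I := rfl
    calc μ[(fun ω => 1 - I ω)|mXY]
        =ᵐ[μ] μ[(fun _ : Ω => (1 : ℝ))|mXY] - μ[I|mXY] := by
          rw [h1]; exact condExp_sub (integrable_const 1) hI_int mXY
      _ =ᵐ[μ] fun ω => 1 - π ω := by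
          rw [condExp_const hmXY_le]
          exact hmodel.mono fun ω hω => by simp [hω]
  have hprod1 : Integrable ((fun ω => g (X ω, Y ω)) * (fun ω => 1 - I ω)) μ :=
    hJg_int.congr (Filter.Eventually.of_forall fun ω => mul_comm ((1 : ℝ) - I ω) (g (X ω, Y ω)))
  have pull1 := condExp_mul_of_stronglyMeasurable_left hg_sm hprod1 hJ_int
  have pull1' : μ[(fun ω => g (X ω, Y ω)) * (fun ω => 1 - I ω)|mXY]
      =ᵐ[μ] fun ω => g (X ω, Y ω) * (1 - π ω) :=
    pull1.trans (hcondJ.mono fun ω hω => by simp only [Pi.mul_apply, hω])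
  have e_step1 : ∫ ω, (1 - I ω) * g (X ω, Y ω) ∂μ = ∫ ω, g (X ω, Y ω) * (1 - π ω) ∂μ := by
    calc ∫ ω, (1 - I ω) * g (X ω, Y ω) ∂μ
        = ∫ ω, ((fun ω => g (X ω, Y ω)) * (fun ω => 1 - I ω)) ω ∂μ :=
          integral_congr_ae (Filter.Eventually.of_forall fun ω => mul_comm _ _)
      _ = ∫ ω, (μ[(fun ω => g (X ω, Y ω)) * (fun ω => 1 - I ω)|mXY]) ω ∂μ :=
          (integral_condExp hmXY_le).symm
      _ = ∫ ω, g (X ω, Y ω) * (1 - π ω) ∂μ := integral_congr_ae pull1'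
  have h1πg : Integrable (fun ω => g (X ω, Y ω) * (1 - π ω)) μ :=
    integrable_condExp.congr pull1'
  have hprod2 : Integrable (M * (fun ω => 1 - I ω)) μ :=
    hJM_int.congr (Filter.Eventually.of_forall fun ω => mul_comm ((1 : ℝ) - I ω) (M ω))
  have pull2 := condExp_mul_of_stronglyMeasurable_left hM_sm hprod2 hJ_int
  have pull2' : μ[M * (fun ω => 1 - I ω)|mXY] =ᵐ[μ] fun ω => M ω * (1 - π ω) :=
    pull2.trans (hcondJ.mono fun ω hω => by simp only [Pi.mul_apply, hω])
  have e_step2 : ∫ ω, (1 - I ω) * M ω ∂μ = ∫ ω, M ω * (1 - π ω) ∂μ := by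
    calc ∫ ω, (1 - I ω) * M ω ∂μ
        = ∫ ω, (M * (fun ω => 1 - I ω)) ω ∂μ :=
          integral_congr_ae (Filter.Eventually.of_forall fun ω => mul_comm _ _)
      _ = ∫ ω, (μ[M * (fun ω => 1 - I ω)|mXY]) ω ∂μ := (integral_condExp hmXY_le).symm
      _ = ∫ ω, M ω * (1 - π ω) ∂μ := integral_congr_ae pull2'
  have h1πM : Integrable (fun ω => M ω * (1 - π ω)) μ := integrable_condExp.congr pull2'
  -- Step 3 and 4 : tilting via key_signed
  have hf1_sm : StronglyMeasurable[mXY]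
      (fun ω => Real.exp (φ (X ω) + γ * Y ω) * g (X ω, Y ω)) := he_sm.mul hg_sm
  have hf1π : Integrable
      (fun ω => (Real.exp (φ (X ω) + γ * Y ω) * g (X ω, Y ω)) * (μ[I|mXY]) ω) μ := by
    refine h1πg.congr (hmodel.mono fun ω hω => ?_)
    simp only [hω]; rw [← hπe ω]; ring
  obtain ⟨hIe_g_int, step3⟩ := key_signed hmXY_le μ hAm hf1_sm hf1π
  have step3' : ∫ ω, I ω * (Real.exp (φ (X ω) + γ * Y ω) * g (X ω, Y ω)) ∂μ
      = ∫ ω, g (X ω, Y ω) * (1 - π ω) ∂μ := by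
    refine step3.trans (integral_congr_ae (hmodel.mono fun ω hω => ?_))
    rw [hIdef] at hω; simp only [hω]; rw [← hπe ω]; ring
  have hf2_sm : StronglyMeasurable[mXY]
      (fun ω => Real.exp (φ (X ω) + γ * Y ω) * M ω) := he_sm.mul hM_sm
  have hf2π : Integrable
      (fun ω => (Real.exp (φ (X ω) + γ * Y ω) * M ω) * (μ[I|mXY]) ω) μ := by
    refine h1πM.congr (hmodel.mono fun ω hω => ?_)
    simp only [hω]; rw [← hπe ω]; ring
  obtain ⟨hIe_M_int, step4⟩ := key_signed hmXY_le μ hAm hf2_sm hf2π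
  have step4' : ∫ ω, I ω * (Real.exp (φ (X ω) + γ * Y ω) * M ω) ∂μ
      = ∫ ω, M ω * (1 - π ω) ∂μ := by
    refine step4.trans (integral_congr_ae (hmodel.mono fun ω hω => ?_))
    rw [hIdef] at hω; simp only [hω]; rw [← hπe ω]; ring
  -- Step 5 : pass to the conditional measure
  have hImul : ∀ (h : Ω → ℝ) (ω : Ω), I ω * h ω = A.indicator h ω := fun h ω => by
    by_cases hω : ω ∈ A
    · simp [hIdef, Set.indicator_of_mem hω]
    · simp [hIdef, Set.indicator_of_notMem hω]
  have hcond_int : ∀ {h : Ω → ℝ}, Integrable (fun ω => I ω * h ω) μ → Integrable h (μ[|A]) := by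
    intro h hh
    have h1 : Integrable (A.indicator h) μ :=
      hh.congr (Filter.Eventually.of_forall fun ω => hImul h ω)
    have h2 : IntegrableOn h A μ := (integrable_indicator_iff hAm).mp h1
    exact h2.smul_measure (ENNReal.inv_ne_top.mpr hA0)
  have hint_cond : ∀ (h : Ω → ℝ),
      ∫ ω, I ω * h ω ∂μ = (μ A).toReal * ∫ ω, h ω ∂(μ[|A]) := by
    intro h
    have h1 : ∫ ω, h ω ∂(μ[|A]) = ((μ A)⁻¹).toReal * ∫ ω in A, h ω ∂μ := by
      show (∫ ω, h ω ∂((μ A)⁻¹ • μ.restrict A)) = _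
      rw [integral_smul_measure]; rfl
    calc ∫ ω, I ω * h ω ∂μ
        = ∫ ω, A.indicator h ω ∂μ :=
          integral_congr_ae (Filter.Eventually.of_forall (hImul h))
      _ = ∫ ω in A, h ω ∂μ := integral_indicator hAm
      _ = (μ A).toReal * ∫ ω, h ω ∂(μ[|A]) := by
          rw [h1, ENNReal.toReal_inv, ← mul_assoc, mul_inv_cancel₀ hμAtoReal, one_mul]
  -- Step 6 : the tilting identity on the conditional measure
  have hEg_ν : Integrable (fun ω => Real.exp (φ (X ω) + γ * Y ω) * g (X ω, Y ω)) (μ[|A]) :=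
    hcond_int hIe_g_int
  have hEM_ν : Integrable (fun ω => Real.exp (φ (X ω) + γ * Y ω) * M ω) (μ[|A]) :=
    hcond_int hIe_M_int
  have hprodA : Integrable ((fun ω => Real.exp (φ (X ω)))
      * (fun ω' => Real.exp (γ * Y ω') * g (X ω', Y ω'))) (μ[|A]) :=
    hEg_ν.congr (Filter.Eventually.of_forall fun ω => by
      simp only [Pi.mul_apply]; rw [Real.exp_add]; ring)
  have pullA := condExp_mul_of_stronglyMeasurable_left (μ := μ[|A]) hq_sm hprodA htilt2
  have hprodB : Integrable (((fun ω => Real.exp (φ (X ω))) * M)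
      * (fun ω' => Real.exp (γ * Y ω'))) (μ[|A]) :=
    hEM_ν.congr (Filter.Eventually.of_forall fun ω => by
      simp only [Pi.mul_apply]; rw [Real.exp_add]; ring)
  have pullB := condExp_mul_of_stronglyMeasurable_left (μ := μ[|A]) (hq_sm.mul hM_smX) hprodB htilt1
  have hMden : ∀ᵐ ω ∂(μ[|A]),
      ((μ[|A])[fun ω' => Real.exp (γ * Y ω') * g (X ω', Y ω')|mX]) ω
        = M ω * ((μ[|A])[fun ω' => Real.exp (γ * Y ω')|mX]) ω :=
    hae_cond (hden.mono fun ω hω => by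
      simp only [hM]
      exact (div_mul_cancel₀ _ hω).symm)
  have step6 : ∫ ω, Real.exp (φ (X ω) + γ * Y ω) * g (X ω, Y ω) ∂(μ[|A])
      = ∫ ω, Real.exp (φ (X ω) + γ * Y ω) * M ω ∂(μ[|A]) := by
    calc ∫ ω, Real.exp (φ (X ω) + γ * Y ω) * g (X ω, Y ω) ∂(μ[|A])
        = ∫ ω, ((fun ω => Real.exp (φ (X ω)))
            * (fun ω' => Real.exp (γ * Y ω') * g (X ω', Y ω'))) ω ∂(μ[|A]) :=
          integral_congr_ae (Filter.Eventually.of_forall fun ω => by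
            simp only [Pi.mul_apply]; rw [Real.exp_add]; ring)
      _ = ∫ ω, ((μ[|A])[(fun ω => Real.exp (φ (X ω)))
            * (fun ω' => Real.exp (γ * Y ω') * g (X ω', Y ω'))|mX]) ω ∂(μ[|A]) :=
          (integral_condExp hmX_le).symm
      _ = ∫ ω, Real.exp (φ (X ω))
            * (M ω * ((μ[|A])[fun ω' => Real.exp (γ * Y ω')|mX]) ω) ∂(μ[|A]) :=
          integral_congr_ae (pullA.trans ((hMden.mono fun ω hω => by
            simp only [Pi.mul_apply, hω])))
      _ = ∫ ω, ((μ[|A])[((fun ω => Real.exp (φ (X ω))) * M)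
            * (fun ω' => Real.exp (γ * Y ω'))|mX]) ω ∂(μ[|A]) :=
          (integral_congr_ae (pullB.mono fun ω hω => by
            simp only [Pi.mul_apply] at hω ⊢; rw [hω]; ring)).symm
      _ = ∫ ω, (((fun ω => Real.exp (φ (X ω))) * M)
            * (fun ω' => Real.exp (γ * Y ω'))) ω ∂(μ[|A]) := integral_condExp hmX_le
      _ = ∫ ω, Real.exp (φ (X ω) + γ * Y ω) * M ω ∂(μ[|A]) :=
          integral_congr_ae (Filter.Eventually.of_forall fun ω => by
            simp only [Pi.mul_apply]; rw [Real.exp_add]; ring)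
  -- assemble
  have final : ∫ ω, (1 - I ω) * g (X ω, Y ω) ∂μ = ∫ ω, (1 - I ω) * M ω ∂μ := by
    calc ∫ ω, (1 - I ω) * g (X ω, Y ω) ∂μ
        = ∫ ω, g (X ω, Y ω) * (1 - π ω) ∂μ := e_step1
      _ = ∫ ω, I ω * (Real.exp (φ (X ω) + γ * Y ω) * g (X ω, Y ω)) ∂μ := step3'.symm
      _ = (μ A).toReal * ∫ ω, Real.exp (φ (X ω) + γ * Y ω) * g (X ω, Y ω) ∂(μ[|A]) :=
          hint_cond _
      _ = (μ A).toReal * ∫ ω, Real.exp (φ (X ω) + γ * Y ω) * M ω ∂(μ[|A]) := by rw [step6]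
      _ = ∫ ω, I ω * (Real.exp (φ (X ω) + γ * Y ω) * M ω) ∂μ := (hint_cond _).symm
      _ = ∫ ω, M ω * (1 - π ω) ∂μ := step4'
      _ = ∫ ω, (1 - I ω) * M ω ∂μ := e_step2.symm
  calc ∫ ω, g (X ω, Y ω) ∂μ
      = ∫ ω, (I ω * g (X ω, Y ω) + (1 - I ω) * g (X ω, Y ω)) ∂μ :=
        integral_congr_ae (Filter.Eventually.of_forall fun ω => by ring)
    _ = (∫ ω, I ω * g (X ω, Y ω) ∂μ) + ∫ ω, (1 - I ω) * g (X ω, Y ω) ∂μ :=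
        integral_add hIg_int hJg_int
    _ = (∫ ω, I ω * g (X ω, Y ω) ∂μ) + ∫ ω, (1 - I ω) * M ω ∂μ := by rw [final]
    _ = ∫ ω, (I ω * g (X ω, Y ω) + (1 - I ω) * M ω) ∂μ :=
        (integral_add hIg_int hJM_int).symm
end
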